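/- Suppose F'' ⊆ F' ⊆ F are facility sets, f ∈ F'' and c ∈ C satisfy: d(c, f'') > 2(l+1)·OPT for all f'' ∈ F' \ {f} (i.e., the ball of radius 2(l+1)·OPT around c meets F' only in f), there exists f' ∈ F with d(c, f') ≤ 2l·OPT, and there exist t and g ∈ F'' \ {f} with f, g ∈ O_t. Then Γ(F') < Γ(F). -/
import Mathlib


open Finset

/-- `Φ` is a consolidation of `F` (with respect to optimal balls `O` and value `OPT`):
it covers `F`, each member has diameter at most `2·OPT`, and any two points of `F`
lying in a common optimal ball lie together in some member. -/
def IsConsolidation {C : Type*} [MetricSpace C] {k : ℕ} (OPT : ℝ)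
    (O : Fin k → Set C) (F : Set C) (Φ : Finset (Set C)) : Prop :=
  (∀ f ∈ F, ∃ P ∈ Φ, f ∈ P) ∧
  (∀ P ∈ Φ, ∀ x ∈ P, ∀ y ∈ P, dist x y ≤ 2 * OPT) ∧
  (∀ t : Fin k, ∀ f ∈ F ∩ O t, ∀ f' ∈ F ∩ O t, ∃ P ∈ Φ, f ∈ P ∧ f' ∈ P)

/-- The consolidation number `Γ(F)`: minimum cardinality of a consolidation of `F`. -/
noncomputable def consolidationNumber {C : Type*} [MetricSpace C] {k : ℕ} (OPT : ℝ)
    (O : Fin k → Set C) (F : Set C) : ℕ :=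
  sInf {n : ℕ | ∃ Φ : Finset (Set C), IsConsolidation OPT O F Φ ∧ Φ.card = n}

-- Key lemma ("Γ decreases by 1"): if `f ∈ F''` is the unique facility of `F'` in
-- the ball of radius `2(l+1)·OPT` around the client `c`, `c` was served within
-- `2l·OPT` by some `f' ∈ F`, and `f` shares an optimal ball with another facility
-- `g ∈ F''`, then the consolidation number strictly decreases from `F` to `F'`.
theorem stmt7 {C : Type*} [MetricSpace C] [Fintype C] [Nonempty C] {k : ℕ}
    (OPT : ℝ) (hOPT : 0 < OPT) (O : Fin k → Set C)
    (hdiamO : ∀ t : Fin k, ∀ x ∈ O t, ∀ y ∈ O t, dist x y ≤ 2 * OPT)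
    (hcover : ∀ c : C, ∃ t : Fin k, c ∈ O t)
    (F F' F'' : Set C) (h1 : F'' ⊆ F') (h2 : F' ⊆ F)
    (f : C) (hf : f ∈ F'') (c : C) (l : ℕ)
    (hball : ∀ f'' ∈ F', f'' ≠ f → 2 * (l + 1) * OPT < dist c f'')
    (hserved : ∃ f' ∈ F, dist c f' ≤ 2 * l * OPT)
    (hg : ∃ t : Fin k, ∃ g ∈ F'', g ≠ f ∧ f ∈ O t ∧ g ∈ O t) :
    consolidationNumber OPT O F' < consolidationNumber OPT O F := by
  classical
  obtain ⟨f', hf'F, hf'd⟩ := hserved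
  obtain ⟨t, g, hgF'', hgf, hfO, hgO⟩ := hg
  have hne : {n : ℕ | ∃ Φ : Finset (Set C), IsConsolidation OPT O F Φ ∧ Φ.card = n}.Nonempty := by
    refine ⟨_, Finset.univ.image O, ⟨fun x hx => ?_, ?_, ?_⟩, rfl⟩
    · obtain ⟨s, hs⟩ := hcover x
      exact ⟨O s, Finset.mem_image_of_mem O (Finset.mem_univ s), hs⟩
    · rintro P hP x hx y hy
      obtain ⟨s, -, rfl⟩ := Finset.mem_image.mp hP
      exact hdiamO s x hx y hy
    · rintro s a ⟨-, ha⟩ b ⟨-, hb⟩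
      exact ⟨O s, Finset.mem_image_of_mem O (Finset.mem_univ s), ha, hb⟩
  have hmem := Nat.sInf_mem hne
  obtain ⟨Φ, ⟨hcov, hdiam, hpair⟩, hcard⟩ := hmem
  obtain ⟨Q, hQΦ, hf'Q⟩ := hcov f' hf'F
  have hQnear : ∀ x ∈ Q, dist c x ≤ 2 * (l + 1) * OPT := by
    intro x hx
    calc dist c x ≤ dist c f' + dist f' x := dist_triangle ..
    _ ≤ 2 * l * OPT + 2 * OPT := add_le_add hf'd (hdiam Q hQΦ f' hf'Q x hx)
    _ = 2 * (l + 1) * OPT := by ring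
  have hQF' : ∀ x ∈ Q, x ∈ F' → x = f := by
    intro x hxQ hxF'
    by_contra hne'
    exact absurd (hQnear x hxQ) (not_le.mpr (hball x hxF' hne'))
  obtain ⟨P, hPΦ, hfP, hgP⟩ := hpair t f ⟨h2 (h1 hf), hfO⟩ g ⟨h2 (h1 hgF''), hgO⟩
  have hgQ : g ∉ Q := fun hgQ => hgf (hQF' g hgQ (h1 hgF''))
  have hPQ : P ≠ Q := fun h => hgQ (h ▸ hgP)
  have hΦ' : IsConsolidation OPT O F' (Φ.erase Q) := by
    refine ⟨?_, ?_, ?_⟩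
    · intro x hx
      obtain ⟨R, hRΦ, hxR⟩ := hcov x (h2 hx)
      by_cases hRQ : R = Q
      · have hxf : x = f := hQF' x (hRQ ▸ hxR) hx
        exact ⟨P, Finset.mem_erase.mpr ⟨hPQ, hPΦ⟩, hxf ▸ hfP⟩
      · exact ⟨R, Finset.mem_erase.mpr ⟨hRQ, hRΦ⟩, hxR⟩
    · intro R hR
      exact hdiam R (Finset.mem_of_mem_erase hR)
    · intro s a ha b hb
      obtain ⟨R, hRΦ, haR, hbR⟩ := hpair s a ⟨h2 ha.1, ha.2⟩ b ⟨h2 hb.1, hb.2⟩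
      by_cases hRQ : R = Q
      · have ha' : a = f := hQF' a (hRQ ▸ haR) ha.1
        have hb' : b = f := hQF' b (hRQ ▸ hbR) hb.1
        exact ⟨P, Finset.mem_erase.mpr ⟨hPQ, hPΦ⟩, ha' ▸ hfP, hb' ▸ hfP⟩
      · exact ⟨R, Finset.mem_erase.mpr ⟨hRQ, hRΦ⟩, haR, hbR⟩
  have hle : consolidationNumber OPT O F' ≤ (Φ.erase Q).card :=
    Nat.sInf_le ⟨Φ.erase Q, hΦ', rfl⟩
  have hlt : (Φ.erase Q).card < Φ.card := Finset.card_erase_lt_of_mem hQΦ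
  have hΓF : consolidationNumber OPT O F = Φ.card := hcard.symm
  omega
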